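/- arXiv:1210.3874 — 8 statements merged into one kernel-verified Lean document; each statement's English description precedes it below -/
import Mathlib

section
/- For all a, b > 0 with a ≠ b, the Neuman-Sándor mean satisfies M(a,b) > (5/9)·G(a,b) + (4/9)·C(a,b), where G(a,b) = √(ab), C(a,b) = (a²+b²)/(a+b), and M(a,b) = (a−b)/(2·arsinh((a−b)/(a+b))). -/
noncomputable def NS (a b : ℝ) : ℝ := (a - b) / (2 * Real.arsinh ((a - b) / (a + b)))
noncomputable def Gmean (a b : ℝ) : ℝ := Real.sqrt (a * b)
noncomputable def Cmean (a b : ℝ) : ℝ := (a ^ 2 + b ^ 2) / (a + b)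

lemma aux_hasDerivAt (x : ℝ) :
    HasDerivAt (fun x : ℝ => x - x ^ 3 / 6 + 3 / 40 * x ^ 5 - Real.arsinh x)
      (1 - x ^ 2 / 2 + 3 / 8 * x ^ 4 - (Real.sqrt (1 + x ^ 2))⁻¹) x := by
  have h1 : HasDerivAt (fun x : ℝ => x - x ^ 3 / 6 + 3 / 40 * x ^ 5)
      (1 - (3 : ℕ) * x ^ 2 / 6 + 3 / 40 * ((5 : ℕ) * x ^ 4)) x := by
    exact ((hasDerivAt_id x).sub ((hasDerivAt_pow 3 x).div_const 6)).add
      ((hasDerivAt_pow 5 x).const_mul (3 / 40))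
  have h2 := h1.sub (Real.hasDerivAt_arsinh x)
  refine h2.congr_deriv ?_
  push_cast
  ring

lemma aux_deriv_nonneg (x : ℝ) :
    0 ≤ 1 - x ^ 2 / 2 + 3 / 8 * x ^ 4 - (Real.sqrt (1 + x ^ 2))⁻¹ := by
  obtain ⟨s, hs⟩ : ∃ s, s = Real.sqrt (1 + x ^ 2) := ⟨_, rfl⟩
  have hs0 : 0 < s := hs ▸ Real.sqrt_pos.mpr (by positivity)
  have hs2 : s ^ 2 = 1 + x ^ 2 := hs ▸ Real.sq_sqrt (by positivity)
  have hd : 0 < 1 - x ^ 2 / 2 + 3 / 8 * x ^ 4 := by nlinarith [sq_nonneg (x ^ 2 - 2 / 3)]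
  rw [← hs, sub_nonneg, inv_le_iff_one_le_mul₀ hs0]
  have hQ : 1 ≤ (1 + x ^ 2) * (1 - x ^ 2 / 2 + 3 / 8 * x ^ 4) ^ 2 := by
    nlinarith [sq_nonneg (x ^ 3 * (x ^ 2 - 5 / 6)), sq_nonneg (x ^ 3)]
  have h2 : 1 ≤ ((1 - x ^ 2 / 2 + 3 / 8 * x ^ 4) * s) ^ 2 := by
    have h3 : ((1 - x ^ 2 / 2 + 3 / 8 * x ^ 4) * s) ^ 2
        = (1 + x ^ 2) * (1 - x ^ 2 / 2 + 3 / 8 * x ^ 4) ^ 2 := by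
      rw [mul_pow, hs2]; ring
    rw [h3]; exact hQ
  nlinarith [mul_pos hd hs0]

lemma arsinh_le_poly {x : ℝ} (hx : 0 ≤ x) :
    Real.arsinh x ≤ x - x ^ 3 / 6 + 3 / 40 * x ^ 5 := by
  have hmono : Monotone (fun x : ℝ => x - x ^ 3 / 6 + 3 / 40 * x ^ 5 - Real.arsinh x) := by
    apply monotone_of_deriv_nonneg
    · exact fun x => (aux_hasDerivAt x).differentiableAt
    · intro x
      rw [(aux_hasDerivAt x).deriv]
      exact aux_deriv_nonneg x
  have := hmono hx
  simp only [Real.arsinh_zero] at this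
  nlinarith [this]

lemma core (t : ℝ) (ht0 : 0 < t) (ht1 : t < 1) :
    Real.arsinh t * (5 / 9 * Real.sqrt (1 - t ^ 2) + 4 / 9 * (1 + t ^ 2)) < t := by
  obtain ⟨s, hs⟩ : ∃ s, s = Real.sqrt (1 - t ^ 2) := ⟨_, rfl⟩
  have hs0 : 0 ≤ s := hs ▸ Real.sqrt_nonneg _
  have hs2 : s ^ 2 = 1 - t ^ 2 := hs ▸ Real.sq_sqrt (by nlinarith)
  obtain ⟨P, hP⟩ : ∃ P, P = t - t ^ 3 / 6 + 3 / 40 * t ^ 5 := ⟨_, rfl⟩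
  have hL : Real.arsinh t ≤ P := hP ▸ arsinh_le_poly ht0.le
  have h3 : t ^ 3 ≤ t := by nlinarith
  have h7 : t ^ 7 ≤ t := by nlinarith [pow_pos ht0 3, pow_pos ht0 5, sq_nonneg (t^3 - t)]
  have hPpos : 0 < P := by rw [hP]; nlinarith [pow_pos ht0 5]
  have hg : 0 < 5 / 9 * s + 4 / 9 * (1 + t ^ 2) := by nlinarith
  have hstep : Real.arsinh t * (5 / 9 * s + 4 / 9 * (1 + t ^ 2)) ≤
      P * (5 / 9 * s + 4 / 9 * (1 + t ^ 2)) := mul_le_mul_of_nonneg_right hL hg.le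
  have hA : 0 < 9 * t - 4 * (1 + t ^ 2) * P := by
    rw [hP]; nlinarith [pow_pos ht0 5]
  have hB : (5 * s * P) ^ 2 < (9 * t - 4 * (1 + t ^ 2) * P) ^ 2 := by
    have he : (5 * s * P) ^ 2 = 25 * (1 - t ^ 2) * P ^ 2 := by
      rw [mul_pow, mul_pow, hs2]; ring
    rw [he, hP]
    nlinarith [pow_pos ht0 6, pow_pos ht0 8, pow_pos ht0 10, pow_pos ht0 12, pow_pos ht0 14,
      pow_lt_one₀ ht0.le ht1 (by norm_num : (2:ℕ) ≠ 0)]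
  have h5 : 5 * s * P < 9 * t - 4 * (1 + t ^ 2) * P := by
    nlinarith [mul_nonneg (mul_nonneg (by norm_num : (0:ℝ) ≤ 5) hs0) hPpos.le]
  rw [← hs]
  calc Real.arsinh t * (5 / 9 * s + 4 / 9 * (1 + t ^ 2))
      ≤ P * (5 / 9 * s + 4 / 9 * (1 + t ^ 2)) := hstep
    _ < t := by linarith [h5]

lemma key (a b : ℝ) (hb : 0 < b) (hlt : b < a) :
    NS a b > (5 / 9) * Gmean a b + (4 / 9) * Cmean a b := by
  have hab : 0 < a + b := by linarith
  set t : ℝ := (a - b) / (a + b) with ht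
  have ht0 : 0 < t := div_pos (by linarith) hab
  have ht1 : t < 1 := (div_lt_one hab).mpr (by linarith)
  have htab : a - b = (a + b) * t := by rw [ht]; field_simp
  obtain ⟨s, hs⟩ : ∃ s, s = Real.sqrt (1 - t ^ 2) := ⟨_, rfl⟩
  have hs0 : 0 ≤ s := hs ▸ Real.sqrt_nonneg _
  have hs2 : s ^ 2 = 1 - t ^ 2 := hs ▸ Real.sq_sqrt (by nlinarith)
  have hG : Gmean a b = (a + b) / 2 * s := by
    rw [Gmean, show a * b = ((a + b) / 2 * s) ^ 2 by
      rw [mul_pow, hs2, ht]; field_simp; ring]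
    exact Real.sqrt_sq (by positivity)
  have hC : Cmean a b = (a + b) / 2 * (1 + t ^ 2) := by
    rw [Cmean, ht]; field_simp; ring
  have hL : 0 < Real.arsinh t := Real.arsinh_pos_iff.mpr ht0
  have hcore := core t ht0 ht1
  rw [← hs] at hcore
  have hNS : NS a b = (a + b) * t / (2 * Real.arsinh t) := by
    rw [NS, ← ht, htab]
  rw [hNS, hG, hC, gt_iff_lt, lt_div_iff₀ (by positivity)]
  nlinarith [mul_lt_mul_of_pos_left hcore hab]

theorem stmt0 (a b : ℝ) (ha : 0 < a) (hb : 0 < b) (hab : a ≠ b) :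
    NS a b > (5 / 9) * Gmean a b + (4 / 9) * Cmean a b := by
  rcases hab.lt_or_gt with h | h
  · have h1 : (a - b) / (a + b) = -((b - a) / (b + a)) := by ring_nf
    have hsymm : NS a b = NS b a := by
      rw [NS, NS, h1, Real.arsinh_neg]
      ring
    have hG : Gmean a b = Gmean b a := by rw [Gmean, Gmean, mul_comm]
    have hC : Cmean a b = Cmean b a := by rw [Cmean, Cmean, add_comm (a^2), add_comm a]
    rw [hsymm, hG, hC]
    exact key b a ha h
  · exact key a b hb h
end

section
/- For all a, b > 0 with a ≠ b, the Neuman-Sándor mean satisfies M(a,b) < β·G(a,b) + (1−β)·C(a,b) with β = 1 − 1/(2·log(1+√2)), where G(a,b) = √(ab) and C(a,b) = (a²+b²)/(a+b). -/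
open Real Set

noncomputable def LL : ℝ := Real.log (1 + Real.sqrt 2)

lemma arsinh_one_eq : Real.arsinh 1 = LL := by
  rw [Real.arsinh, LL]; norm_num

lemma sqrt2_lt : Real.sqrt 2 < 1.41422 := by
  rw [show (1.41422:ℝ) = 1.41422 from rfl]
  nlinarith [Real.sq_sqrt (by norm_num : (0:ℝ) ≤ 2), Real.sqrt_nonneg 2]

lemma sqrt2_gt : 1.414 < Real.sqrt 2 := by
  nlinarith [Real.sq_sqrt (by norm_num : (0:ℝ) ≤ 2), Real.sqrt_nonneg 2]

lemma exp_upper {x : ℝ} (h1 : x < 1) : Real.exp x ≤ 1/(1-x) := by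
  have h := Real.add_one_le_exp (-x)
  have hp : (0:ℝ) < 1 - x := by linarith
  rw [Real.exp_neg] at h
  have h2 : (1-x) * Real.exp x ≤ 1 := by
    have := mul_le_mul_of_nonneg_right h (Real.exp_pos x).le
    rwa [inv_mul_cancel₀ (Real.exp_pos x).ne', show -x+1 = 1-x by ring] at this
  rw [le_div_iff₀ hp]; linarith

lemma LL_ub : LL < 13/14 := by
  have h1 : (1:ℝ) + 13/280 ≤ Real.exp (13/280) := by
    have := Real.add_one_le_exp (13/280 : ℝ); linarith
  have h2 : ((1:ℝ) + 13/280)^20 ≤ Real.exp (13/280)^20 :=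
    pow_le_pow_left₀ (by norm_num) h1 20
  have h3 : Real.exp (13/280)^20 = Real.exp (13/14) := by
    rw [← Real.exp_nat_mul]; norm_num
  have h4 : (1:ℝ) + Real.sqrt 2 < Real.exp (13/14) := by
    have : (2.41422:ℝ) < (1+13/280)^20 := by norm_num
    nlinarith [sqrt2_lt]
  rw [LL, Real.log_lt_iff_lt_exp (by positivity)]
  exact h4

lemma LL_lb : 17/20 < LL := by
  have h1 : Real.exp (17/400) ≤ 1/(1-17/400) := exp_upper (by norm_num)
  have h2 : Real.exp (17/400)^20 ≤ (1/(1-17/400):ℝ)^20 :=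
    pow_le_pow_left₀ (Real.exp_pos _).le h1 20
  have h3 : Real.exp (17/400)^20 = Real.exp (17/20) := by
    rw [← Real.exp_nat_mul]; norm_num
  have h4 : Real.exp (17/20) < 1 + Real.sqrt 2 := by
    have : ((1:ℝ)/(1-17/400))^20 < 2.414 := by norm_num
    nlinarith [sqrt2_gt, h2, h3]
  rw [LL, Real.lt_log_iff_exp_lt (by positivity)]
  exact h4

lemma arsinh_le_self {x : ℝ} (hx : 0 ≤ x) : Real.arsinh x ≤ x := by
  have h : x ≤ Real.sinh x := by
    rcases eq_or_lt_of_le hx with h | h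
    · simp [← h]
    · exact (Real.self_lt_sinh_iff.2 h).le
  calc Real.arsinh x ≤ Real.arsinh (Real.sinh x) := Real.arsinh_le_arsinh.2 h
    _ = x := Real.arsinh_sinh x

lemma arsinh_lower {x : ℝ} (h0 : 0 ≤ x) (h1 : x ≤ 1) : x - x^3/6 ≤ Real.arsinh x := by
  set g : ℝ → ℝ := fun y => Real.arsinh y - y + y^3/6 with hg_def
  have hg : ∀ y : ℝ, HasDerivAt g ((Real.sqrt (1+y^2))⁻¹ - 1 + y^2/2) y := by
    intro y
    have h1 := Real.hasDerivAt_arsinh y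
    have h2 : HasDerivAt (fun y : ℝ => y^3/6) (y^2/2) y := by
      have := (hasDerivAt_pow 3 y).div_const 6
      refine this.congr_deriv ?_
      symm
      norm_num; ring
    exact (h1.sub (hasDerivAt_id y)).add h2
  have mono : MonotoneOn g (Set.Icc 0 1) := by
    apply monotoneOn_of_deriv_nonneg (convex_Icc 0 1)
    · exact Continuous.continuousOn (by continuity)
    · intro y _
      exact (hg y).differentiableAt.differentiableWithinAt
    · intro y hy
      rw [interior_Icc] at hy
      rw [(hg y).deriv]
      set w := Real.sqrt (1+y^2) with hw_def
      have hw2 : w^2 = 1 + y^2 := Real.sq_sqrt (by positivity)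
      have hw0 : 0 < w := Real.sqrt_pos.2 (by positivity)
      have hkey : (1 - y^2/2) * w ≤ 1 := by nlinarith [hy.1, hy.2, sq_nonneg (y*y), sq_nonneg y]
      have hinv : 1 - y^2/2 ≤ w⁻¹ := by
        rw [inv_eq_one_div, le_div_iff₀ hw0]; exact hkey
      linarith
  have h := mono (Set.mem_Icc.2 ⟨le_refl 0, by norm_num⟩) (Set.mem_Icc.2 ⟨h0, h1⟩) h0
  simp only [hg_def, Real.arsinh_zero] at h
  norm_num at h
  linarith

noncomputable def Ff : ℝ → ℝ := fun t =>
  (1 + t^2 + (2*LL-1) * Real.sqrt (1 - t^2)) * Real.arsinh t - 2*LL*t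

noncomputable def Ff1 : ℝ → ℝ := fun t =>
  (2*t - (2*LL-1)*t/Real.sqrt (1-t^2)) * Real.arsinh t
    + (1 + t^2 + (2*LL-1)*Real.sqrt (1-t^2)) / Real.sqrt (1+t^2) - 2*LL

noncomputable def Ff2 : ℝ → ℝ := fun t =>
  (2 - (2*LL-1)/(Real.sqrt (1-t^2))^3) * Real.arsinh t
    + 2*(2*t - (2*LL-1)*t/Real.sqrt (1-t^2))/Real.sqrt (1+t^2)
    - (1 + t^2 + (2*LL-1)*Real.sqrt (1-t^2))*t/(Real.sqrt (1+t^2))^3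

lemma hasDeriv_u {x : ℝ} (h1 : -1 < x) (h2 : x < 1) :
    HasDerivAt (fun t : ℝ => Real.sqrt (1 - t^2)) (-x / Real.sqrt (1-x^2)) x := by
  have hpos : 0 < 1 - x^2 := by nlinarith
  have hinner : HasDerivAt (fun t : ℝ => 1 - t^2) (-(2*x)) x := by
    simpa using ((hasDerivAt_pow 2 x).const_sub 1)
  have hs := (Real.hasDerivAt_sqrt hpos.ne').comp x hinner
  refine hs.congr_deriv ?_
  symm
  field_simp

lemma hasDeriv_w (x : ℝ) :
    HasDerivAt (fun t : ℝ => Real.sqrt (1 + t^2)) (x / Real.sqrt (1+x^2)) x := by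
  have hpos : 0 < 1 + x^2 := by positivity
  have hinner : HasDerivAt (fun t : ℝ => 1 + t^2) (2*x) x := by
    simpa using ((hasDerivAt_pow 2 x).const_add 1)
  have hs := (Real.hasDerivAt_sqrt hpos.ne').comp x hinner
  refine hs.congr_deriv ?_
  symm
  field_simp

lemma hasDeriv_Ff {x : ℝ} (h1 : -1 < x) (h2 : x < 1) : HasDerivAt Ff (Ff1 x) x := by
  have hpos : 0 < 1 - x^2 := by nlinarith
  have hu0 : 0 < Real.sqrt (1-x^2) := Real.sqrt_pos.2 hpos
  have hw0 : 0 < Real.sqrt (1+x^2) := Real.sqrt_pos.2 (by positivity)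
  have hA : HasDerivAt (fun t : ℝ => 1 + t^2 + (2*LL-1) * Real.sqrt (1 - t^2))
      (2*x + (2*LL-1) * (-x / Real.sqrt (1-x^2))) x := by
    have ht2 : HasDerivAt (fun t : ℝ => 1 + t^2) (2*x) x := by
      simpa using ((hasDerivAt_pow 2 x).const_add 1)
    exact ht2.add ((hasDeriv_u h1 h2).const_mul (2*LL-1))
  have hprod := hA.mul (Real.hasDerivAt_arsinh x)
  have hlin : HasDerivAt (fun t : ℝ => 2*LL*t) (2*LL) x := by
    simpa using (hasDerivAt_id x).const_mul (2*LL)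
  have := hprod.sub hlin
  refine this.congr_deriv ?_
  symm
  show Ff1 x = _
  rw [Ff1]
  ring

example : True := trivial

lemma hasDeriv_Ff1 {x : ℝ} (h1 : -1 < x) (h2 : x < 1) : HasDerivAt Ff1 (Ff2 x) x := by
  have hpos : 0 < 1 - x^2 := by nlinarith
  have hu0 : 0 < Real.sqrt (1-x^2) := Real.sqrt_pos.2 hpos
  have hw0 : 0 < Real.sqrt (1+x^2) := Real.sqrt_pos.2 (by positivity)
  have hu2 : (Real.sqrt (1-x^2))^2 = 1 - x^2 := Real.sq_sqrt hpos.le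
  have hq : HasDerivAt (fun t : ℝ => t / Real.sqrt (1-t^2)) (1/(Real.sqrt (1-x^2))^3) x := by
    have := (hasDerivAt_id x).div (hasDeriv_u h1 h2) hu0.ne'
    refine this.congr_deriv ?_
    symm
    rw [id_eq]
    field_simp
    linear_combination (-1)*hu2
  have hB : HasDerivAt (fun t : ℝ => 2*t - (2*LL-1)*(t / Real.sqrt (1-t^2)))
      (2 - (2*LL-1)*(1/(Real.sqrt (1-x^2))^3)) x := by
    have h2t : HasDerivAt (fun t : ℝ => 2*t) 2 x := by
      simpa using (hasDerivAt_id x).const_mul (2:ℝ)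
    exact h2t.sub (hq.const_mul (2*LL-1))
  have hprod := hB.mul (Real.hasDerivAt_arsinh x)
  have hA : HasDerivAt (fun t : ℝ => 1 + t^2 + (2*LL-1) * Real.sqrt (1 - t^2))
      (2*x + (2*LL-1) * (-x / Real.sqrt (1-x^2))) x := by
    have ht2 : HasDerivAt (fun t : ℝ => 1 + t^2) (2*x) x := by
      simpa using ((hasDerivAt_pow 2 x).const_add 1)
    exact ht2.add ((hasDeriv_u h1 h2).const_mul (2*LL-1))
  have hAw := hA.div (hasDeriv_w x) hw0.ne'
  have hAw2 : HasDerivAt (fun y : ℝ => (1 + y^2 + (2*LL-1)*Real.sqrt (1-y^2))/Real.sqrt (1+y^2))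
      ((2*x - (2*LL-1)*(x/Real.sqrt (1-x^2)))/Real.sqrt (1+x^2)
        - (1+x^2+(2*LL-1)*Real.sqrt (1-x^2))*x/(Real.sqrt (1+x^2))^3) x := by
    have hw2 : (Real.sqrt (1+x^2))^2 = 1 + x^2 := Real.sq_sqrt (by positivity)
    refine hAw.congr_deriv ?_
    symm
    field_simp
    linear_combination ((2*LL-1)*x*(Real.sqrt (1-x^2))*(Real.sqrt (1+x^2))^4
      + x*(Real.sqrt (1-x^2))^2*(Real.sqrt (1+x^2))^2*(1-2*(Real.sqrt (1+x^2))^2)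
      + (2*LL-1)*x*(Real.sqrt (1-x^2))^3*(Real.sqrt (1+x^2))^2
      + x^3*(Real.sqrt (1-x^2))^2*(Real.sqrt (1+x^2))^2) * hw2
      + ((x*(Real.sqrt (1-x^2))*(1-2*LL+2*(Real.sqrt (1-x^2)))*(Real.sqrt (1+x^2))^4
      + ((2*x*(Real.sqrt (1-x^2))*LL-x*(Real.sqrt (1-x^2))-3*x*(Real.sqrt (1-x^2))^2-2*x*(Real.sqrt (1-x^2))^3*LL+x*(Real.sqrt (1-x^2))^3+2*x^3*(Real.sqrt (1-x^2))*LL-x^3*(Real.sqrt (1-x^2))-3*x^3*(Real.sqrt (1-x^2))^2) + (1+x^2)*(x*(Real.sqrt (1-x^2))*(1-2*LL+2*(Real.sqrt (1-x^2)))))*(Real.sqrt (1+x^2))^2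
      + ((x*(Real.sqrt (1-x^2))^2+2*x*(Real.sqrt (1-x^2))^3*LL-x*(Real.sqrt (1-x^2))^3+2*x^3*(Real.sqrt (1-x^2))^2+2*x^3*(Real.sqrt (1-x^2))^3*LL-x^3*(Real.sqrt (1-x^2))^3+x^5*(Real.sqrt (1-x^2))^2)
        + (1+x^2)*((2*x*(Real.sqrt (1-x^2))*LL-x*(Real.sqrt (1-x^2))-3*x*(Real.sqrt (1-x^2))^2-2*x*(Real.sqrt (1-x^2))^3*LL+x*(Real.sqrt (1-x^2))^3+2*x^3*(Real.sqrt (1-x^2))*LL-x^3*(Real.sqrt (1-x^2))-3*x^3*(Real.sqrt (1-x^2))^2)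
          + (1+x^2)*(x*(Real.sqrt (1-x^2))*(1-2*LL+2*(Real.sqrt (1-x^2)))))))) * hw2
  have total := (hprod.add hAw2).sub_const (2*LL)
  have hfun : Ff1 = fun t : ℝ => (2*t - (2*LL-1)*(t / Real.sqrt (1-t^2))) * Real.arsinh t
      + (1 + t^2 + (2*LL-1) * Real.sqrt (1 - t^2)) / Real.sqrt (1+t^2) - 2*LL := by
    funext t
    rw [Ff1]
    ring
  rw [hfun]
  refine total.congr_deriv ?_
  symm
  rw [Ff2]
  ring

set_option maxHeartbeats 1000000 in
lemma Ff2_aux {x u w s c : ℝ} (h1 : 4/5 < x) (h2 : x < 1)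
    (hu0 : 0 < u) (hu2 : u^2 = 1 - x^2) (hw0 : 0 < w) (hw2 : w^2 = 1 + x^2)
    (hsl : x - x^3/6 ≤ s) (hsu : s ≤ x) (hcl : 7/10 < c) :
    (2 - c/u^3) * s + 2*(2*x - c*x/u)/w - (1 + x^2 + c*u)*x/w^3 < 0 := by
  have hx0 : 0 < x := by linarith
  have huub : u < 3/5 := by nlinarith
  have hwlb : 32/25 < w := by nlinarith
  have hwub : w < 10/7 := by nlinarith
  have hcore : u^3*(2*w+3) < c*((1-x^2/6)*w + 2*u^2) := by
    have b0 : (0:ℝ) < 1 - x^2/6 := by nlinarith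
    have b1 : u^3*(2*w+3) ≤ (3/5*u^2)*(2*(10/7)+3) := by
      apply mul_le_mul (by nlinarith) (by nlinarith) (by positivity) (by positivity)
    have b2 : (7/10)*((1-x^2/6)*(32/25) + 2*u^2) ≤ c*((1-x^2/6)*w + 2*u^2) := by
      have i1 : (1-x^2/6)*(32/25) + 2*u^2 ≤ (1-x^2/6)*w + 2*u^2 := by nlinarith
      have i2 : (0:ℝ) < (1-x^2/6)*(32/25) + 2*u^2 := by positivity
      nlinarith
    have hu9 : u^2 < 9/25 := by nlinarith
    have hx2u : x^2 = 1 - u^2 := by linarith [hu2]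
    have mid : (3/5*u^2)*(2*(10/7)+3) < (7/10)*((1-x^2/6)*(32/25) + 2*u^2) := by
      rw [hx2u]; nlinarith [hu9]
    linarith [b1, b2, mid]
  have key : 2*s*u^3*w^3 + 3*x*u^3*w^2 < c*(s*w^3 + 2*x*u^2*w^2 + x*u^4) := by
    have e1 : 2*s*u^3*w^3 ≤ 2*x*u^3*w^3 := by
      nlinarith [mul_le_mul_of_nonneg_right hsu (show (0:ℝ) ≤ u^3*w^3 by positivity)]
    have e2 : c*(x*(1-x^2/6))*w^3 ≤ c*s*w^3 := by
      have : (x - x^3/6)*(c*w^3) ≤ s*(c*w^3) :=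
        mul_le_mul_of_nonneg_right hsl (by positivity)
      nlinarith [this]
    have e3 : (0:ℝ) ≤ c*(x*u^4) := by positivity
    have e4 : x*w^2*(u^3*(2*w+3)) < x*w^2*(c*((1-x^2/6)*w + 2*u^2)) :=
      mul_lt_mul_of_pos_left hcore (by positivity)
    nlinarith [e1, e2, e3, e4]
  have hp : (0:ℝ) < u^3*w^3 := by positivity
  have hval : ((2 - c/u^3)*s + 2*(2*x - c*x/u)/w - (1+x^2+c*u)*x/w^3) * (u^3*w^3)
      = 2*s*u^3*w^3 + 3*x*u^3*w^2 - c*(s*w^3 + 2*x*u^2*w^2 + x*u^4) := by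
    field_simp
    linear_combination (u^3*x)*hw2
  have h6 := div_neg_of_neg_of_pos (show ((2 - c/u^3)*s + 2*(2*x - c*x/u)/w
      - (1+x^2+c*u)*x/w^3) * (u^3*w^3) < 0 from by rw [hval]; linarith [key]) hp
  rwa [mul_div_assoc, div_self hp.ne', mul_one] at h6


lemma Ff2_neg {x : ℝ} (h1 : 4/5 < x) (h2 : x < 1) : Ff2 x < 0 := by
  have hx0 : 0 < x := by linarith
  have hpos : 0 < 1 - x^2 := by nlinarith
  have h := Ff2_aux (u := Real.sqrt (1-x^2)) (w := Real.sqrt (1+x^2))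
    (s := Real.arsinh x) (c := 2*LL-1) h1 h2
    (Real.sqrt_pos.2 hpos) (Real.sq_sqrt hpos.le)
    (Real.sqrt_pos.2 (by positivity)) (Real.sq_sqrt (by positivity))
    (arsinh_lower hx0.le h2.le) (arsinh_le_self hx0.le)
    (by have := LL_lb; linarith)
  exact h

lemma FfA_aux {x u s c : ℝ} (h0 : 0 < x) (h1 : x ≤ 4/5) (hu0 : 0 < u)
    (hu2 : u^2 = 1 - x^2) (hsl : x - x^3/6 ≤ s) (hcl : 0 < c) (hcu : c ≤ 6/7) :
    0 < (1 + x^2 + c*u)*s - (c+1)*x := by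
  have hulb : 3/5 ≤ u := by nlinarith
  have huub : u < 1 := by nlinarith
  have hA0 : 0 < 1 + x^2 + c*u := by positivity
  have hneg : u*(1-x^2/6) - 1 < 0 := by nlinarith
  have hmono : (6/7)*(u*(1-x^2/6)-1) ≤ c*(u*(1-x^2/6)-1) := by nlinarith
  have hfact : (1+x^2)*(1-x^2/6) - 1 + (6/7)*(u*(1-x^2/6)-1)
      = (1-u)*(7*u^3+u^2+22*u-8)/42 := by
    linear_combination (2/3 - u/7 + u^2/6 - x^2/6)*hu2
  have hquart : 0 < (1-u)*(7*u^3+u^2+22*u-8)/42 := by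
    have q1 : 0 < 1 - u := by linarith
    have q2 : 0 < 7*u^3+u^2+22*u-8 := by nlinarith
    positivity
  have hinner : 0 < (1+x^2+c*u)*(1-x^2/6) - (c+1) := by nlinarith [hmono, hfact, hquart]
  have step1 : (1+x^2+c*u)*(x - x^3/6) ≤ (1+x^2+c*u)*s :=
    mul_le_mul_of_nonneg_left hsl hA0.le
  have step2 : (1+x^2+c*u)*(x-x^3/6) - (c+1)*x = x*((1+x^2+c*u)*(1-x^2/6) - (c+1)) := by
    ring
  nlinarith [mul_pos h0 hinner]

lemma Ff_one : Ff 1 = 0 := by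
  rw [Ff]
  norm_num
  rw [arsinh_one_eq]
  ring

lemma Ff_pos {t : ℝ} (h0 : 0 < t) (h1 : t < 1) : 0 < Ff t := by
  have hLlb := LL_lb
  have hLub := LL_ub
  have partA : ∀ y : ℝ, 0 < y → y ≤ 4/5 → 0 < Ff y := by
    intro y hy0 hy1
    have hpos : 0 < 1 - y^2 := by nlinarith
    have h := FfA_aux (u := Real.sqrt (1-y^2)) (s := Real.arsinh y) (c := 2*LL-1)
      hy0 hy1 (Real.sqrt_pos.2 hpos) (Real.sq_sqrt hpos.le)
      (arsinh_lower hy0.le (by linarith)) (by linarith) (by linarith)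
    show 0 < (1 + y^2 + (2*LL-1) * Real.sqrt (1-y^2)) * Real.arsinh y - 2*LL*y
    have e : 2*LL*y = ((2*LL-1)+1)*y := by ring
    rw [e]
    exact h
  rcases le_or_gt t (4/5) with h|h
  · exact partA t h0 h
  · have hcont : ContinuousOn Ff (Set.Icc (4/5) 1) := by
      apply Continuous.continuousOn
      have c1 : Continuous fun t : ℝ => 1+t^2+(2*LL-1)*Real.sqrt (1-t^2) := by
        apply Continuous.add (by continuity)
        exact continuous_const.mul (Real.continuous_sqrt.comp (by continuity))
      exact (c1.mul Real.continuous_arsinh).sub (by continuity)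
    have hconc : StrictConcaveOn ℝ (Set.Icc (4/5:ℝ) 1) Ff := by
      apply strictConcaveOn_of_deriv2_neg (convex_Icc _ _) hcont
      intro y hy
      rw [interior_Icc] at hy
      have hne : deriv (deriv Ff) y = deriv Ff1 y := by
        apply Filter.EventuallyEq.deriv_eq
        have hmem : Set.Ioo (-1:ℝ) 1 ∈ nhds y := Ioo_mem_nhds (by linarith [hy.1]) hy.2
        filter_upwards [hmem] with z hz
        exact (hasDeriv_Ff hz.1 hz.2).deriv
      show deriv^[2] Ff y < 0
      rw [Function.iterate_succ_apply', Function.iterate_one, hne,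
        (hasDeriv_Ff1 (by linarith [hy.1]) hy.2).deriv]
      exact Ff2_neg hy.1 hy.2
    have h45 : 0 < Ff (4/5) := partA (4/5) (by norm_num) le_rfl
    have hmem1 : (4/5:ℝ) ∈ Set.Icc (4/5:ℝ) 1 := by norm_num
    have hmem2 : (1:ℝ) ∈ Set.Icc (4/5:ℝ) 1 := by norm_num
    have hcb := hconc.2 hmem1 hmem2 (by norm_num)
      (show 0 < 5*(1-t) by linarith) (show 0 < 5*t-4 by linarith) (by ring)
    simp only [smul_eq_mul] at hcb
    have harg : 5*(1-t)*(4/5) + (5*t-4)*1 = t := by ring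
    rw [harg, Ff_one, mul_zero, add_zero] at hcb
    calc (0:ℝ) < 5*(1-t) * Ff (4/5) := mul_pos (by linarith) h45
      _ < Ff t := hcb

lemma keyineq {t : ℝ} (h0 : 0 < t) (h1 : t < 1) :
    t / Real.arsinh t < (1 - 1/(2*LL)) * Real.sqrt (1-t^2)
      + (1 - (1 - 1/(2*LL))) * (1+t^2) := by
  have hL : 0 < LL := by have := LL_lb; linarith
  have hs : 0 < Real.arsinh t := Real.arsinh_pos_iff.2 h0
  have hF := Ff_pos h0 h1
  unfold Ff at hF
  rw [div_lt_iff₀ hs]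
  have hexp : (1 - 1/(2*LL)) * Real.sqrt (1-t^2) + (1 - (1 - 1/(2*LL))) * (1+t^2)
      = ((2*LL-1)*Real.sqrt (1-t^2) + (1+t^2))/(2*LL) := by
    field_simp
    ring
  rw [hexp, div_mul_eq_mul_div, lt_div_iff₀ (by linarith)]
  nlinarith [hF]


lemma main_lt {a b : ℝ} (ha : 0 < a) (hb : 0 < b) (hba : b < a) :
    NS a b < (1 - 1 / (2 * Real.log (1 + Real.sqrt 2))) * Gmean a b +
      (1 - (1 - 1 / (2 * Real.log (1 + Real.sqrt 2)))) * Cmean a b := by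
  have hab : 0 < a + b := by linarith
  set t := (a-b)/(a+b) with ht_def
  have ht0 : 0 < t := div_pos (by linarith) hab
  have ht1 : t < 1 := by rw [ht_def, div_lt_one hab]; linarith
  have hs : 0 < Real.arsinh t := Real.arsinh_pos_iff.2 ht0
  have hNS : NS a b = ((a+b)/2) * (t / Real.arsinh t) := by
    simp only [NS]
    rw [ht_def]
    field_simp
  have hG : Gmean a b = ((a+b)/2) * Real.sqrt (1-t^2) := by
    simp only [Gmean]
    have habm : a*b = ((a+b)/2)^2 * (1-t^2) := by rw [ht_def]; field_simp; ring
    rw [habm, Real.sqrt_mul (sq_nonneg _), Real.sqrt_sq (by positivity : (0:ℝ) ≤ (a+b)/2)]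
  have hC : Cmean a b = ((a+b)/2) * (1+t^2) := by
    simp only [Cmean]
    rw [ht_def]
    field_simp
    ring
  rw [hNS, hG, hC, show Real.log (1+Real.sqrt 2) = LL from rfl]
  have hk := keyineq ht0 ht1
  nlinarith [mul_lt_mul_of_pos_left hk (show (0:ℝ) < (a+b)/2 by linarith)]

theorem stmt1 (a b : ℝ) (ha : 0 < a) (hb : 0 < b) (hab : a ≠ b) :
    NS a b < (1 - 1 / (2 * Real.log (1 + Real.sqrt 2))) * Gmean a b +
      (1 - (1 - 1 / (2 * Real.log (1 + Real.sqrt 2)))) * Cmean a b := by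
  rcases lt_or_gt_of_ne hab with h | h
  · have key := main_lt hb ha h
    have hNS : NS a b = NS b a := by
      simp only [NS]
      rw [show (b-a)/(b+a) = -((a-b)/(a+b)) by rw [add_comm b a]; ring, Real.arsinh_neg]
      rw [mul_neg, div_neg]
      ring
    have hG : Gmean a b = Gmean b a := by simp only [Gmean]; rw [mul_comm]
    have hC : Cmean a b = Cmean b a := by
      simp only [Cmean]; rw [add_comm (a^2), add_comm a b]
    rw [hNS, hG, hC]
    exact key
  · exact main_lt ha hb h
end

section
/- If β > 1 − 1/(2·log(1+√2)), then there exist a, b > 0 with a ≠ b such that M(a,b) > β·G(a,b) + (1−β)·C(a,b); that is, the constant 1 − 1/(2·log(1+√2)) in the upper bound is optimal. -/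
open Topology Filter Set

theorem stmt3 (β : ℝ) (hβ : β > 1 - 1 / (2 * Real.log (1 + Real.sqrt 2))) :
    ∃ a b : ℝ, 0 < a ∧ 0 < b ∧ a ≠ b ∧
      NS a b > β * Gmean a b + (1 - β) * Cmean a b := by
  have harsinh1 : Real.arsinh 1 = Real.log (1 + Real.sqrt 2) := by
    rw [Real.arsinh]; norm_num
  have hL : 0 < Real.log (1 + Real.sqrt 2) := by
    apply Real.log_pos
    have : 0 < Real.sqrt 2 := Real.sqrt_pos.mpr (by norm_num)
    linarith
  set g : ℝ → ℝ := fun b =>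
    (1 - b) / (2 * Real.arsinh ((1 - b) / (1 + b))) -
      (β * Real.sqrt (1 * b) + (1 - β) * ((1 ^ 2 + b ^ 2) / (1 + b))) with hgdef
  have hg0 : 0 < g 0 := by
    have e1 : g 0 = 1 / (2 * Real.log (1 + Real.sqrt 2)) - (1 - β) := by
      simp [hgdef, harsinh1]
    rw [e1]
    linarith
  have hcont : ContinuousAt g 0 := by
    apply ContinuousAt.sub
    · apply ContinuousAt.div
      · fun_prop
      · apply ContinuousAt.mul continuousAt_const
        apply Real.continuous_arsinh.continuousAt.comp
        apply ContinuousAt.div <;> [fun_prop; fun_prop; norm_num]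
      · simp only [sub_zero, add_zero, div_one, ne_eq, mul_eq_zero, harsinh1]
        push_neg
        exact ⟨by norm_num, ne_of_gt hL⟩
    · apply ContinuousAt.add
      · exact continuousAt_const.mul ((Real.continuous_sqrt.continuousAt).comp (by fun_prop))
      · apply ContinuousAt.mul continuousAt_const
        apply ContinuousAt.div <;> [fun_prop; fun_prop; norm_num]
  have hev : ∀ᶠ b in 𝓝[>] (0:ℝ), 0 < g b :=
    (continuousAt_const.eventually_lt hcont hg0).filter_mono nhdsWithin_le_nhds
  have hev2 : ∀ᶠ b in 𝓝[>] (0:ℝ), b < 1 := by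
    filter_upwards [Ioo_mem_nhdsGT_of_mem (by norm_num : (0:ℝ) ∈ Set.Ico 0 1)] with b hb
    exact hb.2
  obtain ⟨b, ⟨hgb, hb1⟩, hb0⟩ := ((hev.and hev2).and self_mem_nhdsWithin).exists
  refine ⟨1, b, one_pos, hb0, ne_of_gt hb1, ?_⟩
  have : g b > 0 := hgb
  simp only [hgdef] at this
  simp only [NS, Gmean, Cmean, gt_iff_lt]
  linarith
end

section
/- For p = 5/9 and all t ∈ (0,1), φ_p(t) := arsinh(√(1−t²)) − √(1−t²)/((p−1)t² + p·t + 2 − 2p) is strictly negative. -/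
theorem stmt4 (t : ℝ) (ht : t ∈ Set.Ioo (0 : ℝ) 1) :
    Real.arsinh (Real.sqrt (1 - t ^ 2)) -
      Real.sqrt (1 - t ^ 2) /
        ((5 / 9 - 1) * t ^ 2 + (5 / 9) * t + 2 - 2 * (5 / 9)) < 0 := by
  obtain ⟨ht0, ht1⟩ := ht
  have h1t : (0:ℝ) < 1 - t ^ 2 := by nlinarith
  set s := Real.sqrt (1 - t ^ 2) with hs
  have hs2 : s ^ 2 = 1 - t ^ 2 := Real.sq_sqrt h1t.le
  have hsp : 0 < s := Real.sqrt_pos.mpr h1t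
  set D : ℝ := (5 / 9 - 1) * t ^ 2 + (5 / 9) * t + 2 - 2 * (5 / 9) with hDdef
  have hDp : (0:ℝ) < D := by rw [hDdef]; nlinarith
  set x := s / D with hx
  have hxp : 0 < x := div_pos hsp hDp
  -- exponential lower bound
  have hP : (1 + x + x ^ 2 / 2 + x ^ 3 / 6 + x ^ 4 / 24 : ℝ) ≤ Real.exp x := by
    have h := Real.sum_le_exp_of_nonneg hxp.le 5
    simp [Finset.sum_range_succ, Nat.factorial] at h
    linarith
  have hPp : (0:ℝ) < 1 + x + x ^ 2 / 2 + x ^ 3 / 6 + x ^ 4 / 24 := by positivity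
  have hExp : Real.exp (-x) ≤ (1 + x + x ^ 2 / 2 + x ^ 3 / 6 + x ^ 4 / 24)⁻¹ := by
    rw [Real.exp_neg]
    exact inv_anti₀ hPp hP
  -- sinh lower bound : x + x^3/6 < sinh x
  have hsinh : x + x ^ 3 / 6 < Real.sinh x := by
    rw [Real.sinh_eq]
    have hinv : (1 + x + x ^ 2 / 2 + x ^ 3 / 6 + x ^ 4 / 24)⁻¹ *
        (1 + x + x ^ 2 / 2 + x ^ 3 / 6 + x ^ 4 / 24) = 1 :=
      inv_mul_cancel₀ hPp.ne'
    have key : (2 * (x + x ^ 3 / 6) + (1 + x + x ^ 2 / 2 + x ^ 3 / 6 + x ^ 4 / 24)⁻¹) *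
        (1 + x + x ^ 2 / 2 + x ^ 3 / 6 + x ^ 4 / 24) <
        (1 + x + x ^ 2 / 2 + x ^ 3 / 6 + x ^ 4 / 24) *
        (1 + x + x ^ 2 / 2 + x ^ 3 / 6 + x ^ 4 / 24) := by
      have expand : (1 + x + x ^ 2 / 2 + x ^ 3 / 6 + x ^ 4 / 24) *
          (1 + x + x ^ 2 / 2 + x ^ 3 / 6 + x ^ 4 / 24) -
          2 * (x + x ^ 3 / 6) * (1 + x + x ^ 2 / 2 + x ^ 3 / 6 + x ^ 4 / 24) - 1 =
          x ^ 6 / 72 + x ^ 8 / 576 := by ring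
      have h6 : 0 < x ^ 6 := pow_pos hxp 6
      have h8 : 0 < x ^ 8 := pow_pos hxp 8
      nlinarith [hinv]
    have h2 : 2 * (x + x ^ 3 / 6) + (1 + x + x ^ 2 / 2 + x ^ 3 / 6 + x ^ 4 / 24)⁻¹ <
        1 + x + x ^ 2 / 2 + x ^ 3 / 6 + x ^ 4 / 24 :=
      lt_of_mul_lt_mul_right key hPp.le
    linarith
  -- polynomial step : s ≤ x + x^3/6
  have hpoly : 6 * D ^ 3 ≤ 6 * D ^ 2 + s ^ 2 := by
    rw [hs2, hDdef]
    nlinarith [sq_nonneg (1 - t), mul_pos ht0 (sub_pos.mpr ht1), sq_nonneg (t * (1 - t)),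
      sq_nonneg ((1 - t) * (1 - t)), ht0.le, ht1.le, sq_nonneg t]
  have hB : s ≤ x + x ^ 3 / 6 := by
    have hrew : x + x ^ 3 / 6 - s = s * (6 * D ^ 2 + s ^ 2 - 6 * D ^ 3) / (6 * D ^ 3) := by
      rw [hx]; field_simp
    have hnn : 0 ≤ s * (6 * D ^ 2 + s ^ 2 - 6 * D ^ 3) / (6 * D ^ 3) :=
      div_nonneg (mul_nonneg hsp.le (by linarith)) (by positivity)
    linarith [hrew ▸ hnn]
  have hss : s < Real.sinh x := lt_of_le_of_lt hB hsinh
  have harc : Real.arsinh s < x := by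
    have h := Real.arsinh_lt_arsinh.mpr hss
    rwa [Real.arsinh_sinh] at h
  rw [hx] at harc
  linarith
end

section
/- For p = 1 − 1/(2·log(1+√2)) and all t ∈ (0,1), φ_p(t) := arsinh(√(1−t²)) − √(1−t²)/((p−1)t² + p·t + 2 − 2p) is strictly positive. -/
open Real Set
set_option maxHeartbeats 1000000

lemma convexOn_sinh' : ConvexOn ℝ (Set.Ici (0:ℝ)) Real.sinh := by
  apply convexOn_of_deriv2_nonneg (convex_Ici 0) Real.continuous_sinh.continuousOn
    Real.differentiable_sinh.differentiableOn
  · rw [Real.deriv_sinh]; exact Real.differentiable_cosh.differentiableOn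
  · intro x hx
    simp only [Function.iterate_succ, Function.iterate_zero, Function.comp_apply, id]
    rw [Real.deriv_sinh, Real.deriv_cosh]
    rw [interior_Ici] at hx
    exact Real.sinh_nonneg_iff.2 (le_of_lt hx)

lemma lemA (s : ℝ) (h0 : 0 ≤ s) (h1 : s ≤ 1) :
    s * Real.arsinh 1 ≤ Real.arsinh s := by
  have hA : (0:ℝ) ≤ Real.arsinh 1 := by
    rw [Real.arsinh_nonneg_iff]; norm_num
  have hc := convexOn_sinh'.2 (Set.mem_Ici.2 le_rfl) (Set.mem_Ici.2 hA)
    (by linarith : (0:ℝ) ≤ 1 - s) h0 (by ring)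
  simp only [smul_eq_mul, mul_zero, zero_add, Real.sinh_zero, Real.sinh_arsinh] at hc
  -- hc : sinh (s * arsinh 1) ≤ (1-s)*0 + s*1
  have hc' : Real.sinh (s * Real.arsinh 1) ≤ s := by linarith
  have := Real.arsinh_le_arsinh.2 hc'
  rwa [Real.arsinh_sinh] at this

lemma lemB (s : ℝ) (h0 : 0 ≤ s) (h1 : s ≤ 1) :
    s - s ^ 3 / 6 ≤ Real.arsinh s := by
  set f : ℝ → ℝ := fun x => Real.arsinh x - x + x ^ 3 / 6 with hf
  have hderiv : ∀ x : ℝ, HasDerivAt f ((Real.sqrt (1 + x ^ 2))⁻¹ - 1 + x ^ 2 / 2) x := by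
    intro x
    have h1' := (Real.hasDerivAt_arsinh x).sub (hasDerivAt_id x)
    have h2' : HasDerivAt (fun x : ℝ => x ^ 3 / 6) (x ^ 2 / 2) x := by
      have := (hasDerivAt_pow 3 x).div_const 6
      exact this.congr_deriv (by push_cast; ring)
    have := h1'.add h2'
    exact this
  have hmono : MonotoneOn f (Set.Icc 0 1) := by
    apply monotoneOn_of_deriv_nonneg (convex_Icc 0 1)
    · exact fun x _ => ((hderiv x).continuousAt).continuousWithinAt
    · exact fun x _ => ((hderiv x).differentiableAt).differentiableWithinAt
    · intro x hx
      rw [interior_Icc] at hx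
      rw [(hderiv x).deriv]
      have hx0 : 0 ≤ x := le_of_lt hx.1
      have hx1 : x ≤ 1 := le_of_lt hx.2
      set r := Real.sqrt (1 + x ^ 2) with hr
      have hrpos : 0 < r := Real.sqrt_pos.2 (by nlinarith)
      have hrsq : r ^ 2 = 1 + x ^ 2 := Real.sq_sqrt (by nlinarith)
      have key : (1 - x ^ 2 / 2) * r ≤ 1 := by nlinarith [sq_nonneg ((1 - x^2/2)*r - 1), sq_nonneg x, sq_nonneg (x*x)]
      have : 1 - x ^ 2 / 2 ≤ 1 / r := (le_div_iff₀ hrpos).2 (by linarith)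
      rw [one_div] at this
      linarith
  have := hmono (Set.mem_Icc.2 ⟨le_rfl, zero_le_one⟩) (Set.mem_Icc.2 ⟨h0, h1⟩) h0
  have hf0 : f 0 = 0 := by simp [hf, Real.arsinh_zero]
  rw [hf0] at this
  simp only [hf] at this
  linarith

theorem stmt5 (t : ℝ) (ht : t ∈ Set.Ioo (0 : ℝ) 1) :
    let p : ℝ := 1 - 1 / (2 * Real.log (1 + Real.sqrt 2))
    Real.arsinh (Real.sqrt (1 - t ^ 2)) -
      Real.sqrt (1 - t ^ 2) / ((p - 1) * t ^ 2 + p * t + 2 - 2 * p) > 0 := by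
  obtain ⟨ht0, ht1⟩ := ht
  intro p
  set L : ℝ := Real.log (1 + Real.sqrt 2) with hL
  set q : ℝ := 1 / (2 * L) with hq
  have hp : p = 1 - q := rfl
  -- sqrt 2 bounds
  have h2a : Real.sqrt 2 < 1.5 := by
    rw [show (1.5:ℝ) = Real.sqrt (1.5^2) by rw [Real.sqrt_sq]; norm_num]
    apply Real.sqrt_lt_sqrt <;> norm_num
  have h2b : (1.41:ℝ) < Real.sqrt 2 := by
    rw [show (1.41:ℝ) = Real.sqrt (1.41^2) by rw [Real.sqrt_sq]; norm_num]
    apply Real.sqrt_lt_sqrt <;> norm_num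
  -- L < 1
  have hL1 : L < 1 := by
    have he : (1:ℝ) + Real.sqrt 2 < Real.exp 1 := by
      have := Real.exp_one_gt_d9
      linarith
    calc L < Real.log (Real.exp 1) := Real.log_lt_log (by linarith) he
    _ = 1 := Real.log_exp 1
  -- L > 0.8
  have hL0 : (0.8:ℝ) < L := by
    have hx : Real.exp 0.8 < 1 + Real.sqrt 2 := by
      have h9 : Real.exp (-0.1) > 0.9 := by
        have := Real.add_one_lt_exp (x := (-0.1:ℝ)) (by norm_num)
        linarith
      have h10 : Real.exp 0.1 < 10/9 := by
        have hm : Real.exp 0.1 * Real.exp (-0.1) = 1 := by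
          rw [← Real.exp_add]; norm_num
        nlinarith [Real.exp_pos (0.1:ℝ)]
      have h8 : Real.exp 0.8 = (Real.exp 0.1) ^ 8 := by
        rw [← Real.exp_nat_mul]; norm_num
      have : (Real.exp 0.1) ^ 8 < (10/9:ℝ)^8 := by
        apply pow_lt_pow_left₀ h10 (le_of_lt (Real.exp_pos _))
        norm_num
      rw [h8]
      calc (Real.exp 0.1) ^ 8 < (10/9:ℝ)^8 := this
      _ < 1 + Real.sqrt 2 := by norm_num; nlinarith
    calc (0.8:ℝ) = Real.log (Real.exp 0.8) := (Real.log_exp _).symm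
    _ < L := Real.log_lt_log (Real.exp_pos _) hx
  -- q bounds
  have hLpos : 0 < L := by linarith
  have hq1 : q < 0.625 := by
    rw [hq, div_lt_iff₀ (by linarith)]
    linarith
  have hq0 : (0.5:ℝ) < q := by
    rw [hq, lt_div_iff₀ (by linarith)]
    linarith
  have hqL : 2 * q * L = 1 := by
    rw [hq]; field_simp
  -- s facts
  set s : ℝ := Real.sqrt (1 - t ^ 2) with hs
  have h1t : 0 < 1 - t ^ 2 := by nlinarith
  have hs0 : 0 < s := Real.sqrt_pos.2 h1t
  have hss : s ^ 2 = 1 - t ^ 2 := Real.sq_sqrt (le_of_lt h1t)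
  have hs1 : s ≤ 1 := by nlinarith
  -- D
  set D : ℝ := (p - 1) * t ^ 2 + p * t + 2 - 2 * p with hD
  have hDq : D = -q * t ^ 2 + (1 - q) * t + 2 * q := by rw [hD, hp]; ring
  -- arsinh 1 = L
  have harsinh1 : Real.arsinh 1 = L := by
    rw [Real.arsinh, hL]
    norm_num
  rcases le_or_gt t 0.6 with hc | hc
  · -- case t ≤ 0.6
    have hDpos : 0 < D := by rw [hDq]; nlinarith
    have hLD : 1 < L * D := by
      rw [hDq]
      have : L * (-q * t ^ 2 + (1 - q) * t + 2 * q) = 1 + L * t * (1 - q - q * t) := by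
        linear_combination hqL
      rw [this]
      nlinarith [mul_pos (mul_pos hLpos ht0) (show (0:ℝ) < 1 - q - q*t by nlinarith)]
    have hA := lemA s (le_of_lt hs0) hs1
    rw [harsinh1] at hA
    have hkey : s / D < s * L := by
      rw [div_lt_iff₀ hDpos]
      nlinarith [mul_pos hs0 (show (0:ℝ) < L * D - 1 by linarith)]
    linarith
  · -- case t > 0.6
    have hG : 0 < q * t ^ 3 + (2 * q - 1) * t ^ 2 + (5 * q - 1) * t + (10 * q - 6) := by
      nlinarith [mul_nonneg (by linarith : (0:ℝ) ≤ q) (show (0:ℝ) ≤ t^3 - 0.216 by nlinarith),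
        mul_nonneg (by linarith : (0:ℝ) ≤ 2*q - 1) (show (0:ℝ) ≤ t^2 - 0.36 by nlinarith),
        mul_nonneg (by linarith : (0:ℝ) ≤ 5*q - 1) (show (0:ℝ) ≤ t - 0.6 by linarith)]
    have hDG : 0 < D * (5 + t ^ 2) - 6 := by
      have hfac : D * (5 + t ^ 2) - 6 = (1 - t) * (q * t ^ 3 + (2 * q - 1) * t ^ 2 + (5 * q - 1) * t + (10 * q - 6)) := by
        rw [hDq]; ring
      rw [hfac]
      exact mul_pos (by linarith) hG
    have hDpos : 0 < D := by nlinarith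
    have hB := lemB s (le_of_lt hs0) hs1
    have hs3 : s ^ 3 = s * (1 - t ^ 2) := by
      rw [show s^3 = s * s^2 by ring, hss]
    have hkey : s / D < s - s ^ 3 / 6 := by
      rw [div_lt_iff₀ hDpos, hs3]
      nlinarith [mul_pos hs0 hDG]
    linarith
end

section
/- For all t ∈ (0,1), the function g(t) = −45t + 216t² − 144t⁴ − (64 + 160t − 117t² − 160t³ + 80t⁴)·√(2−t²) is strictly negative. -/
theorem stmt9 (t : ℝ) (ht : t ∈ Set.Ioo (0 : ℝ) 1) :
    -45 * t + 216 * t ^ 2 - 144 * t ^ 4 -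
      (64 + 160 * t - 117 * t ^ 2 - 160 * t ^ 3 + 80 * t ^ 4) *
        Real.sqrt (2 - t ^ 2) < 0 := by
  obtain ⟨h0, h1⟩ := ht
  set s := Real.sqrt (2 - t ^ 2) with hs
  have hnn : (0:ℝ) ≤ 2 - t ^ 2 := by nlinarith
  have hs2 : s ^ 2 = 2 - t ^ 2 := Real.sq_sqrt hnn
  have hs0 : 0 ≤ s := Real.sqrt_nonneg _
  have hs1 : 1 ≤ s := by nlinarith [sq_nonneg (s - 1), sq_nonneg (s + 1)]
  have hB : (0:ℝ) < 64 + 160 * t - 117 * t ^ 2 - 160 * t ^ 3 + 80 * t ^ 4 := by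
    nlinarith [sq_nonneg t, sq_nonneg (1 - t), sq_nonneg (t * (1 - t)), mul_pos h0 (sub_pos.mpr h1)]
  have hAB : -45 * t + 216 * t ^ 2 - 144 * t ^ 4 <
      64 + 160 * t - 117 * t ^ 2 - 160 * t ^ 3 + 80 * t ^ 4 := by
    nlinarith [mul_pos h0 (sub_pos.mpr h1), sq_nonneg t, sq_nonneg (1 - t),
      mul_pos (mul_pos h0 h0) (sub_pos.mpr h1), sq_nonneg (t * (1 - t))]
  have := mul_le_mul_of_nonneg_left hs1 hB.le
  nlinarith
end

section
/- For all t ∈ (3/4, 1), (864 + 45t − 4320t² + 2304t⁴)/√2 + 532 + 2560t − 2973t² − 2560t³ + 2000t⁴ < 0. -/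
theorem stmt12 (t : ℝ) (ht : t ∈ Set.Ioo (3 / 4 : ℝ) 1) :
    (864 + 45 * t - 4320 * t ^ 2 + 2304 * t ^ 4) / Real.sqrt 2 +
      532 + 2560 * t - 2973 * t ^ 2 - 2560 * t ^ 3 + 2000 * t ^ 4 < 0 := by
  obtain ⟨h1, h2⟩ := ht
  set s := Real.sqrt 2 with hs
  have hs0 : (0:ℝ) < s := Real.sqrt_pos.mpr (by norm_num)
  have hs2 : s ^ 2 = 2 := Real.sq_sqrt (by norm_num)
  have hsub : s < 1.415 := by nlinarith
  have hslb : (1.4:ℝ) < s := by nlinarith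
  have hA : 864 + 45 * t - 4320 * t ^ 2 + 2304 * t ^ 4 < 0 := by
    nlinarith [sq_nonneg t, sq_nonneg (t - 3/4), sq_nonneg (1 - t), mul_pos (sub_pos.mpr h1) (sub_pos.mpr h2), sq_nonneg (t*t - 1), mul_nonneg (mul_nonneg (sub_pos.mpr h1).le (sub_pos.mpr h2).le) (sq_nonneg t)]
  have key : (864 + 45 * t - 4320 * t ^ 2 + 2304 * t ^ 4) / s <
      (7/10) * (864 + 45 * t - 4320 * t ^ 2 + 2304 * t ^ 4) := by
    rw [div_lt_iff₀ hs0]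
    nlinarith
  have hB : (7/10) * (864 + 45 * t - 4320 * t ^ 2 + 2304 * t ^ 4) +
      532 + 2560 * t - 2973 * t ^ 2 - 2560 * t ^ 3 + 2000 * t ^ 4 < 0 := by
    nlinarith [mul_pos (sub_pos.mpr h1) (sub_pos.mpr h2), mul_nonneg (mul_nonneg (sub_pos.mpr h1).le (sub_pos.mpr h2).le) (sq_nonneg t), sq_nonneg (t - 3/4), sq_nonneg (1 - t)]
  linarith
end

section
/- Let δ = log(1+√2). For all t ∈ (0, 1/2], C(t) + D(t) < 0, where C(t) = 2δ·t·(1 − 2δ + 6t − 4t³) and D(t) = −4 + (8−16δ)t + (9+12δ−12δ²)t² + (16δ−8)t³ − 5t⁴. -/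
theorem stmt14 (t : ℝ) (ht : t ∈ Set.Ioc (0 : ℝ) (1 / 2)) :
    let δ := Real.log (1 + Real.sqrt 2)
    2 * δ * t * (1 - 2 * δ + 6 * t - 4 * t ^ 3) +
      (-4 + (8 - 16 * δ) * t + (9 + 12 * δ - 12 * δ ^ 2) * t ^ 2 +
        (16 * δ - 8) * t ^ 3 - 5 * t ^ 4) < 0 := by
  intro δ
  obtain ⟨ht0, ht1⟩ := ht
  have hs2 : Real.sqrt 2 ^ 2 = 2 := Real.sq_sqrt (by norm_num)
  have hs2lb : (1.414 : ℝ) ≤ Real.sqrt 2 := by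
    nlinarith [Real.sqrt_nonneg 2, hs2]
  have hs2ub : Real.sqrt 2 ≤ 1.415 := by
    nlinarith [Real.sqrt_nonneg 2, hs2]
  have hpos : (0:ℝ) < 1 + Real.sqrt 2 := by linarith
  have hub : δ < 1 := by
    have : (1 + Real.sqrt 2 : ℝ) < Real.exp 1 := by
      have := Real.exp_one_gt_d9
      linarith
    calc δ < Real.log (Real.exp 1) := Real.log_lt_log hpos this
    _ = 1 := Real.log_exp 1
  have hlb : (3/4 : ℝ) < δ := by
    have h1 : Real.exp (3/4) < 1 + Real.sqrt 2 := by
      have he : Real.exp 1 < 2.7182818286 := Real.exp_one_lt_d9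
      have hep : (0:ℝ) < Real.exp (3/4) := Real.exp_pos _
      have h4 : Real.exp (3/4) ^ 4 = Real.exp 3 := by
        rw [← Real.exp_nat_mul]; norm_num
      have h3 : Real.exp 3 = Real.exp 1 ^ 3 := by
        rw [← Real.exp_nat_mul]; norm_num
      have hcube : Real.exp 3 < 20.1 := by
        rw [h3]
        have h2 : Real.exp 1 ^ 2 < 7.39 := by nlinarith [Real.exp_pos 1]
        nlinarith [Real.exp_pos 1, h2]
      nlinarith [Real.exp_pos (3/4), sq_nonneg (Real.exp (3/4)), sq_nonneg (Real.exp (3/4) - 2.414), sq_nonneg (Real.exp (3/4) + 2.414)]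
    calc (3/4 : ℝ) = Real.log (Real.exp (3/4)) := (Real.log_exp _).symm
    _ < δ := Real.log_lt_log (Real.exp_pos _) h1
  have h1 : (0:ℝ) < 1 - δ := by linarith
  have h2 : (0:ℝ) < δ - 3/4 := by linarith
  have h3 : (0:ℝ) ≤ 1/2 - t := by linarith
  nlinarith [mul_pos ht0 h1, mul_pos ht0 h2, mul_nonneg h3 h1.le, mul_nonneg h3 h2.le,
    mul_pos (mul_pos ht0 ht0) h1, mul_pos (mul_pos ht0 ht0) h2,
    mul_nonneg (mul_nonneg h3 ht0.le) h1.le, mul_nonneg (mul_nonneg h3 ht0.le) h2.le,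
    mul_pos (mul_pos ht0 h1) h2, mul_nonneg (mul_nonneg h3 h1.le) h2.le,
    mul_pos (mul_pos (mul_pos ht0 ht0) ht0) ht0, sq_nonneg (t - 1/2), sq_nonneg (δ - 7/8),
    mul_nonneg (mul_nonneg (mul_nonneg h3 h3) ht0.le) ht0.le,
    mul_nonneg (mul_nonneg (mul_nonneg ht0.le ht0.le) h1.le) h2.le]
end
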